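/- Under the hypotheses of the sufficiency theorem for (P1) — U a nonempty convex subset of ℝᵈ, β ∈ (0,1), σ ∈ ℝⁿ, (x̂, û) ∈ c₀(ℕ, ℝⁿ) × ℓ∞(ℕ, U) and p ∈ ℓ¹(ℕ*, ℝⁿ*) satisfying: (i) x̂_{t+1} = f(x̂_t, û_t) for all t ∈ ℕ and x̂₀ = σ; (ii) φ and f of class C¹ on ℝⁿ × U; (iii) φ maps bounded subsets of ℝⁿ × U into bounded subsets of ℝ; (iv) p_t = p_{t+1} ∘ D₁f(x̂_t, û_t) + βᵗ D₁φ(x̂_t, û_t) for all t ≥ 1; (v) ⟨p_{t+1} ∘ D₂f(x̂_t, û_t) + βᵗ D₂φ(x̂_t, û_t), u − û_t⟩ ≤ 0 for all u ∈ U, t ∈ ℕ; (vi) (x, u) ↦ ⟨p_{t+1}, f(x, u)⟩ + βᵗ φ(x, u) concave on ℝⁿ × U for all t ∈ ℕ — the process (x̂, û) is also a solution of the problem: maximize Σ_{t=0}^{∞} βᵗ φ(x_t, u_t) over all BOUNDED sequences x ∈ ℓ∞(ℕ, ℝⁿ) and u ∈ ℓ∞(ℕ, U) with x₀ = σ and x_{t+1}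 = f(x_t, u_t) for all t ∈ ℕ. -/

import Mathlib

open Filter Topology Bornology Set

/-- Remark 10.3.  Under the hypotheses of the sufficiency theorem for
(P1) (Theorem 10.1, conditions (i)–(vi)), the process `(x̂, û)` also maximizes
`Σ βᵗ φ(x_t, u_t)` among all *bounded* sequences `x ∈ ℓ∞(ℕ, ℝⁿ)` and `u ∈ ℓ∞(ℕ, U)`
with `x₀ = σ` and `x_{t+1} = f(x_t, u_t)`.  `φ` and `f` are total
functions; "of class `C¹` on `ℝⁿ × U`" is rendered by `C¹` on `univ ×ˢ U₁` for an open
`U₁ ⊇ U`. -/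
lemma concave_grad {E : Type*} [NormedAddCommGroup E] [NormedSpace ℝ E]
    {s : Set E} {g : E → ℝ} (hg : ConcaveOn ℝ s g) {x y : E} (hx : x ∈ s) (hy : y ∈ s)
    {g' : E →L[ℝ] ℝ} (hd : HasFDerivAt g g' x) :
    g y - g x ≤ g' (y - x) := by
  set h : ℝ → ℝ := fun t => g (x + t • (y - x)) with hh
  have hline : HasDerivAt (fun t : ℝ => x + t • (y - x)) (y - x) (0 : ℝ) := by
    simpa using (((hasDerivAt_id (0:ℝ)).smul_const (y - x)).const_add x)
  have hderiv : HasDerivAt h (g' (y - x)) 0 := by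
    have hd' : HasFDerivAt g g' (x + (0:ℝ) • (y - x)) := by simpa using hd
    exact hd'.comp_hasDerivAt (0:ℝ) hline
  have hslope : Tendsto (slope h 0) (𝓝[>] (0:ℝ)) (𝓝 (g' (y - x))) :=
    (hasDerivAt_iff_tendsto_slope.mp hderiv).mono_left
      (nhdsWithin_mono _ (fun t ht => ne_of_gt ht))
  refine ge_of_tendsto hslope ?_
  filter_upwards [Ioc_mem_nhdsGT_of_mem (by exact ⟨le_rfl, zero_lt_one⟩ : (0:ℝ) ∈ Ico 0 1)]
    with t ht
  have ht0 : 0 < t := ht.1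
  have hconc := hg.2 hx hy (by linarith [ht.2] : (0:ℝ) ≤ 1 - t) ht0.le (by ring)
  have hpt : (1 - t) • x + t • y = x + t • (y - x) := by
    rw [smul_sub, sub_smul, one_smul]; abel
  rw [hpt] at hconc
  have : t * (g y - g x) ≤ h t - h 0 := by
    simp only [smul_eq_mul] at hconc
    simp only [hh, zero_smul, add_zero]
    nlinarith
  rw [slope_def_field, sub_zero]
  rw [le_div_iff₀ ht0]
  linarith

theorem stmt_18 {n d : ℕ}
    (U : Set (Fin d → ℝ)) (hUne : U.Nonempty) (hUconv : Convex ℝ U)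
    (β : ℝ) (hβ : 0 < β ∧ β < 1) (σ : Fin n → ℝ)
    (φ : (Fin n → ℝ) → (Fin d → ℝ) → ℝ)
    (f : (Fin n → ℝ) → (Fin d → ℝ) → (Fin n → ℝ))
    (xhat : ℕ → (Fin n → ℝ)) (uhat : ℕ → (Fin d → ℝ))
    (hxhat0 : Tendsto xhat atTop (𝓝 0))
    (huhatU : ∀ t, uhat t ∈ U) (huhatbd : IsBounded (Set.range uhat))
    (p : ℕ → ((Fin n → ℝ) →L[ℝ] ℝ)) (hp : Summable fun t => ‖p t‖)
    -- (i)
    (hinit : xhat 0 = σ) (hdyn : ∀ t : ℕ, xhat (t + 1) = f (xhat t) (uhat t))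
    -- (ii): φ, f of class C¹ on ℝⁿ × U
    (U1 : Set (Fin d → ℝ)) (hU1open : IsOpen U1) (hUU1 : U ⊆ U1)
    (hφ : ContDiffOn ℝ 1 (fun q : (Fin n → ℝ) × (Fin d → ℝ) => φ q.1 q.2) (Set.univ ×ˢ U1))
    (hf : ContDiffOn ℝ 1 (fun q : (Fin n → ℝ) × (Fin d → ℝ) => f q.1 q.2) (Set.univ ×ˢ U1))
    -- (iii): φ maps bounded subsets of ℝⁿ × U into bounded subsets of ℝ
    (hφbdd : ∀ s : Set ((Fin n → ℝ) × (Fin d → ℝ)), s ⊆ Set.univ ×ˢ U → IsBounded s →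
      IsBounded ((fun q : (Fin n → ℝ) × (Fin d → ℝ) => φ q.1 q.2) '' s))
    -- (iv): adjoint equation
    (hAE : ∀ t : ℕ, 1 ≤ t →
      p t = (p (t + 1)).comp (fderiv ℝ (fun x => f x (uhat t)) (xhat t))
        + β ^ t • fderiv ℝ (fun x => φ x (uhat t)) (xhat t))
    -- (v): weak maximum principle
    (hWM : ∀ t : ℕ, ∀ u ∈ U,
      (p (t + 1)) (fderiv ℝ (fun v => f (xhat t) v) (uhat t) (u - uhat t))
        + β ^ t * (fderiv ℝ (fun v => φ (xhat t) v) (uhat t) (u - uhat t)) ≤ 0)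
    -- (vi): concavity of the Hamiltonian
    (hconc : ∀ t : ℕ, ConcaveOn ℝ (Set.univ ×ˢ U)
      (fun q : (Fin n → ℝ) × (Fin d → ℝ) => (p (t + 1)) (f q.1 q.2) + β ^ t * φ q.1 q.2)) :
    -- conclusion: (x̂, û) also solves the problem over bounded state sequences
    ∀ (x : ℕ → (Fin n → ℝ)) (u : ℕ → (Fin d → ℝ)),
      IsBounded (Set.range x) → (∀ t, u t ∈ U) → IsBounded (Set.range u) →
      x 0 = σ → (∀ t : ℕ, x (t + 1) = f (x t) (u t)) →
      (∑' t : ℕ, β ^ t * φ (x t) (u t)) ≤ ∑' t : ℕ, β ^ t * φ (xhat t) (uhat t) := by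
  intro x u hxbd huU hubd hx0 hxdyn
  obtain ⟨hβ0, hβ1⟩ := hβ
  set a : ℕ → ℝ := fun t => β ^ t * φ (x t) (u t) with ha_def
  set b : ℕ → ℝ := fun t => β ^ t * φ (xhat t) (uhat t) with hb_def
  have hxhatbd : IsBounded (range xhat) := Metric.isBounded_range_of_tendsto _ hxhat0
  -- uniform bound on φ along admissible bounded processes
  have bound : ∀ (y : ℕ → (Fin n → ℝ)) (v : ℕ → (Fin d → ℝ)),
      IsBounded (range y) → (∀ t, v t ∈ U) → IsBounded (range v) →
      ∃ M, ∀ t, |φ (y t) (v t)| ≤ M := by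
    intro y v hy hv hvb
    have hsub : range (fun t => (y t, v t)) ⊆ (range y) ×ˢ (range v) := by
      rintro _ ⟨t, rfl⟩; exact ⟨⟨t, rfl⟩, ⟨t, rfl⟩⟩
    have hsU : range (fun t => (y t, v t)) ⊆ Set.univ ×ˢ U := by
      rintro _ ⟨t, rfl⟩; exact ⟨mem_univ _, hv t⟩
    have hbd : IsBounded (range (fun t => (y t, v t))) :=
      (hy.prod hvb).subset hsub
    obtain ⟨M, hM⟩ := isBounded_iff_forall_norm_le.mp (hφbdd _ hsU hbd)
    exact ⟨M, fun t => by
      simpa [Real.norm_eq_abs] using hM _ ⟨(y t, v t), ⟨t, rfl⟩, rfl⟩⟩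
  obtain ⟨Ma, hMa⟩ := bound x u hxbd huU hubd
  obtain ⟨Mb, hMb⟩ := bound xhat uhat hxhatbd huhatU huhatbd
  have hgeo : Summable (fun t : ℕ => β ^ t) :=
    summable_geometric_of_lt_one hβ0.le hβ1
  have hsummable : ∀ (M : ℝ) (c : ℕ → ℝ), (∀ t, |c t| ≤ M) →
      Summable (fun t => β ^ t * c t) := by
    intro M c hc
    refine Summable.of_norm_bounded (hgeo.mul_left M) (fun t => ?_)
    have hβt : 0 ≤ β ^ t := pow_nonneg hβ0.le t
    rw [Real.norm_eq_abs, abs_mul, abs_of_nonneg hβt]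
    calc β ^ t * |c t| ≤ β ^ t * M := mul_le_mul_of_nonneg_left (hc t) hβt
      _ = M * β ^ t := mul_comm _ _
  have hsa : Summable a := hsummable Ma _ hMa
  have hsb : Summable b := hsummable Mb _ hMb
  -- the key per-step estimate
  have key : ∀ t : ℕ, a t - b t ≤
      p t (x t - xhat t) - p (t + 1) (x (t + 1) - xhat (t + 1)) := by
    intro t
    set F : (Fin n → ℝ) × (Fin d → ℝ) → (Fin n → ℝ) := fun q => f q.1 q.2 with hF
    set Φ : (Fin n → ℝ) × (Fin d → ℝ) → ℝ := fun q => φ q.1 q.2 with hΦ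
    set qh : (Fin n → ℝ) × (Fin d → ℝ) := (xhat t, uhat t) with hqh
    set q : (Fin n → ℝ) × (Fin d → ℝ) := (x t, u t) with hq
    have hopen : IsOpen ((Set.univ : Set (Fin n → ℝ)) ×ˢ U1) := isOpen_univ.prod hU1open
    have hmem1 : qh ∈ (Set.univ : Set (Fin n → ℝ)) ×ˢ U1 := ⟨mem_univ _, hUU1 (huhatU t)⟩
    have hFd : HasFDerivAt F (fderiv ℝ F qh) qh :=
      (((hf.differentiableOn one_ne_zero).differentiableAt (hopen.mem_nhds hmem1))).hasFDerivAt
    have hΦd : HasFDerivAt Φ (fderiv ℝ Φ qh) qh :=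
      (((hφ.differentiableOn one_ne_zero).differentiableAt (hopen.mem_nhds hmem1))).hasFDerivAt
    set Df := fderiv ℝ F qh with hDf
    set DΦ := fderiv ℝ Φ qh with hDΦ
    set D : ((Fin n → ℝ) × (Fin d → ℝ)) →L[ℝ] ℝ := (p (t + 1)).comp Df + β ^ t • DΦ with hD
    have hHd : HasFDerivAt (fun q : (Fin n → ℝ) × (Fin d → ℝ) =>
        (p (t + 1)) (f q.1 q.2) + β ^ t * φ q.1 q.2) D qh :=
      (((p (t + 1)).hasFDerivAt).comp qh hFd).add (hΦd.const_mul _)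
    have hxmem : qh ∈ (Set.univ : Set (Fin n → ℝ)) ×ˢ U := ⟨mem_univ _, huhatU t⟩
    have hymem : q ∈ (Set.univ : Set (Fin n → ℝ)) ×ˢ U := ⟨mem_univ _, huU t⟩
    have hineq := concave_grad (hconc t) hxmem hymem hHd
    -- partial derivatives
    have h1f : HasFDerivAt (fun x0 => f x0 (uhat t))
        (Df.comp (ContinuousLinearMap.inl ℝ _ _)) (xhat t) :=
      (hFd.comp (xhat t) (hasFDerivAt_prodMk_left (xhat t) (uhat t)) :
        HasFDerivAt (F ∘ fun e => (e, uhat t)) _ _)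
    have h1φ : HasFDerivAt (fun x0 => φ x0 (uhat t))
        (DΦ.comp (ContinuousLinearMap.inl ℝ _ _)) (xhat t) :=
      (hΦd.comp (xhat t) (hasFDerivAt_prodMk_left (xhat t) (uhat t)) :
        HasFDerivAt (Φ ∘ fun e => (e, uhat t)) _ _)
    have h2f : HasFDerivAt (fun v => f (xhat t) v)
        (Df.comp (ContinuousLinearMap.inr ℝ _ _)) (uhat t) :=
      (hFd.comp (uhat t) (hasFDerivAt_prodMk_right (xhat t) (uhat t)) :
        HasFDerivAt (F ∘ fun e => (xhat t, e)) _ _)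
    have h2φ : HasFDerivAt (fun v => φ (xhat t) v)
        (DΦ.comp (ContinuousLinearMap.inr ℝ _ _)) (uhat t) :=
      (hΦd.comp (uhat t) (hasFDerivAt_prodMk_right (xhat t) (uhat t)) :
        HasFDerivAt (Φ ∘ fun e => (xhat t, e)) _ _)
    set Δx := x t - xhat t with hΔx
    set Δu := u t - uhat t with hΔu
    have hsplit : q - qh = ((Δx, 0) : (Fin n → ℝ) × (Fin d → ℝ)) + (0, Δu) := by
      simp [hq, hqh, Prod.ext_iff, hΔx, hΔu]
    have hDval : D (q - qh) = (p (t + 1) (Df (Δx, 0)) + β ^ t * DΦ (Δx, 0))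
        + (p (t + 1) (Df (0, Δu)) + β ^ t * DΦ (0, Δu)) := by
      rw [hsplit, map_add]
      simp only [hD, ContinuousLinearMap.add_apply, ContinuousLinearMap.comp_apply,
        ContinuousLinearMap.smul_apply, smul_eq_mul]
    have e1f : Df (Δx, 0) = fderiv ℝ (fun x0 => f x0 (uhat t)) (xhat t) Δx := by
      rw [h1f.fderiv]; rfl
    have e1φ : DΦ (Δx, 0) = fderiv ℝ (fun x0 => φ x0 (uhat t)) (xhat t) Δx := by
      rw [h1φ.fderiv]; rfl
    have e2f : Df (0, Δu) = fderiv ℝ (fun v => f (xhat t) v) (uhat t) Δu := by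
      rw [h2f.fderiv]; rfl
    have e2φ : DΦ (0, Δu) = fderiv ℝ (fun v => φ (xhat t) v) (uhat t) Δu := by
      rw [h2φ.fderiv]; rfl
    have hterm1 : p (t + 1) (Df (Δx, 0)) + β ^ t * DΦ (Δx, 0) = p t Δx := by
      rcases Nat.eq_zero_or_pos t with rfl | ht1
      · have h0 : Δx = 0 := by rw [hΔx, hx0, hinit, sub_self]
        simp [h0, Prod.mk_zero_zero]
      · rw [e1f, e1φ, hAE t ht1]
        simp [ContinuousLinearMap.add_apply, ContinuousLinearMap.comp_apply,
          ContinuousLinearMap.smul_apply, smul_eq_mul]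
    have hterm2 : p (t + 1) (Df (0, Δu)) + β ^ t * DΦ (0, Δu) ≤ 0 := by
      rw [e2f, e2φ]
      exact hWM t (u t) (huU t)
    -- left-hand side rewrite
    have hLHS : ((p (t + 1)) (f q.1 q.2) + β ^ t * φ q.1 q.2)
        - ((p (t + 1)) (f qh.1 qh.2) + β ^ t * φ qh.1 qh.2)
        = p (t + 1) (x (t + 1) - xhat (t + 1)) + (a t - b t) := by
      simp only [hq, hqh, ← hxdyn, ← hdyn, map_sub, ha_def, hb_def]
      ring
    rw [hLHS, hDval] at hineq
    linarith [hterm2, hterm1.le, hterm1.ge]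
  -- telescoping and passage to the limit
  obtain ⟨Cx, hCx⟩ := isBounded_iff_forall_norm_le.mp hxbd
  obtain ⟨Ch, hCh⟩ := isBounded_iff_forall_norm_le.mp hxhatbd
  set C := Cx + Ch with hC
  have hΔbd : ∀ T, ‖x T - xhat T‖ ≤ C := fun T =>
    (norm_sub_le _ _).trans (add_le_add (hCx _ ⟨T, rfl⟩) (hCh _ ⟨T, rfl⟩))
  have hpartial : ∀ T, ∑ t ∈ Finset.range T, (a t - b t) ≤ ‖p T‖ * C := by
    intro T
    have htel : ∑ t ∈ Finset.range T,
        ((fun t => p t (x t - xhat t)) t - (fun t => p t (x t - xhat t)) (t + 1))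
        = p 0 (x 0 - xhat 0) - p T (x T - xhat T) :=
      Finset.sum_range_sub' (fun t => p t (x t - xhat t)) T
    have h00 : x 0 - xhat 0 = 0 := by rw [hx0, hinit, sub_self]
    calc ∑ t ∈ Finset.range T, (a t - b t)
        ≤ ∑ t ∈ Finset.range T,
          ((fun t => p t (x t - xhat t)) t - (fun t => p t (x t - xhat t)) (t + 1)) :=
          Finset.sum_le_sum (fun t _ => key t)
      _ = p 0 (x 0 - xhat 0) - p T (x T - xhat T) := htel
      _ = - p T (x T - xhat T) := by rw [h00]; simp
      _ ≤ ‖p T (x T - xhat T)‖ := (neg_le_abs _).trans_eq (Real.norm_eq_abs _).symm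
      _ ≤ ‖p T‖ * ‖x T - xhat T‖ := (p T).le_opNorm _
      _ ≤ ‖p T‖ * C := mul_le_mul_of_nonneg_left (hΔbd T) (norm_nonneg _)
  have hpt0 : Tendsto (fun T => ‖p T‖) atTop (𝓝 0) := hp.tendsto_atTop_zero
  have htendC : Tendsto (fun T => ‖p T‖ * C) atTop (𝓝 0) := by
    simpa using hpt0.mul_const C
  have hsum_tend : Tendsto (fun T => ∑ t ∈ Finset.range T, (a t - b t)) atTop
      (𝓝 (∑' t, (a t - b t))) := (hsa.sub hsb).hasSum.tendsto_sum_nat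
  have hle : (∑' t, (a t - b t)) ≤ 0 := le_of_tendsto_of_tendsto' hsum_tend htendC hpartial
  rw [hsa.tsum_sub hsb] at hle
  linarith
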